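/- Suppose β₂ > α + β₁*. Then: (a) for every pair of distinct points x, y ∈ D, lim_{t→0⁺} [t|x−y|^{−α} A_{Φ₀,Φ₀,1}(t,x,y)] / A_{Φ₁,Φ₂,ℓ}(t,x,y) = 0; (b) for every pair of distinct points Q, Q′ ∈ ∂D, lim_{t→0⁺} L(t) = +∞, where L(t) denotes the limit inferior of [t|x−y|^{−α} A_{Φ₀,Φ₀,1}(t,x,y)] / A_{Φ₁,Φ₂,ℓ}(t,x,y) as x → Q and y → Q′ with x, y ∈ D. -/

import Mathlib

open Set Metric MeasureTheory Real Filter Topology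

noncomputable section

/-- `f` satisfies the lower scaling condition at zero with index `b`. -/
def HasLowerScaling (f : ℝ → ℝ) (b : ℝ) : Prop :=
  ∃ C : ℝ, 1 ≤ C ∧ ∀ s r : ℝ, 0 < s → s ≤ r → r ≤ 1 → C⁻¹ * (r / s) ^ b ≤ f r / f s

/-- `f` satisfies the upper scaling condition at zero with index `b`. -/
def HasUpperScaling (f : ℝ → ℝ) (b : ℝ) : Prop :=
  ∃ C : ℝ, 1 ≤ C ∧ ∀ s r : ℝ, 0 < s → s ≤ r → r ≤ 1 → f r / f s ≤ C * (r / s) ^ b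

/-- The lower Matuszewska index of `f` at zero equals `β`,
i.e. `β` is the supremum of the indices for which the lower scaling condition holds. -/
def LowerIndexIs (f : ℝ → ℝ) (β : ℝ) : Prop :=
  (∀ b : ℝ, b < β → HasLowerScaling f b) ∧ (∀ b : ℝ, β < b → ¬ HasLowerScaling f b)

/-- The upper Matuszewska index of `f` at zero equals `β`,
i.e. `β` is the infimum of the indices for which the upper scaling condition holds. -/
def UpperIndexIs (f : ℝ → ℝ) (β : ℝ) : Prop :=
  (∀ b : ℝ, β < b → HasUpperScaling f b) ∧ (∀ b : ℝ, b < β → ¬ HasUpperScaling f b)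

/-- `f` is almost increasing on `(0,1]`. -/
def AlmostIncreasingOn01 (f : ℝ → ℝ) : Prop :=
  ∃ C : ℝ, 1 ≤ C ∧ ∀ s r : ℝ, 0 < s → s ≤ r → r ≤ 1 → f s ≤ C * f r

/-- `f` is almost decreasing on `(0,1]`. -/
def AlmostDecreasingOn01 (f : ℝ → ℝ) : Prop :=
  ∃ C : ℝ, 1 ≤ C ∧ ∀ s r : ℝ, 0 < s → s ≤ r → r ≤ 1 → f r ≤ C * f s

/-- A positive Borel function on `(0,∞)`, equal to `1` on `[1,∞)`. -/
def StdFun (f : ℝ → ℝ) : Prop :=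
  Measurable f ∧ (∀ r : ℝ, 0 < r → 0 < f r) ∧ (∀ r : ℝ, 1 ≤ r → f r = 1)

/-- The scaling condition for the slowly varying factor `ℓ`, with parameters `β₁, β₂`. -/
def EllScaling (l : ℝ → ℝ) (β₁ β₂ : ℝ) : Prop :=
  ∀ ε : ℝ, 0 < ε → ∃ C : ℝ, 1 ≤ C ∧ ∀ s r : ℝ, 0 < s → s ≤ r → r ≤ 1 →
    C⁻¹ * (r / s) ^ (-(min ε β₁)) ≤ l r / l s ∧ l r / l s ≤ C * (r / s) ^ (min ε β₂)

/-- `l` has both Matuszewska indices at zero equal to `0`. -/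
def SlowlyVaryingScaling (l : ℝ → ℝ) : Prop :=
  ∀ ε : ℝ, 0 < ε → ∃ C : ℝ, 1 ≤ C ∧ ∀ s r : ℝ, 0 < s → s ≤ r → r ≤ 1 →
    C⁻¹ * (r / s) ^ (-ε) ≤ l r / l s ∧ l r / l s ≤ C * (r / s) ^ ε

/-- The distance to the boundary of `D`. -/
def dd {d : ℕ} (D : Set (EuclideanSpace ℝ (Fin d))) (x : EuclideanSpace ℝ (Fin d)) : ℝ :=
  Metric.infDist x (frontier D)

/-- The function `A_{f,g,h}(t,x,y)`. -/
def Afun {d : ℕ} (α : ℝ) (D : Set (EuclideanSpace ℝ (Fin d))) (f g h : ℝ → ℝ)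
    (t : ℝ) (x y : EuclideanSpace ℝ (Fin d)) : ℝ :=
  f (max (min (dd D x) (dd D y)) (t ^ (1 / α)) / dist x y) *
  g (max (max (dd D x) (dd D y)) (t ^ (1 / α)) / dist x y) *
  h (max (min (dd D x) (dd D y)) (t ^ (1 / α)) /
      min (max (max (dd D x) (dd D y)) (t ^ (1 / α))) (dist x y))

/-- The inward unit vector `𝐧ₓ = (x - Qₓ)/δ_D(x)`. -/
def nv {d : ℕ} (D : Set (EuclideanSpace ℝ (Fin d)))
    (Q : EuclideanSpace ℝ (Fin d) → EuclideanSpace ℝ (Fin d))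
    (x : EuclideanSpace ℝ (Fin d)) : EuclideanSpace ℝ (Fin d) :=
  (dd D x)⁻¹ • (x - Q x)

/-- `∫_a^b A_{f,g,h}(t,x,x+u𝐧ₓ) A_{f,g,h}(t,x+u𝐧ₓ,y) u^{-α-1} du`. -/
def Iint {d : ℕ} (α : ℝ) (D : Set (EuclideanSpace ℝ (Fin d)))
    (Q : EuclideanSpace ℝ (Fin d) → EuclideanSpace ℝ (Fin d))
    (f g h : ℝ → ℝ) (a b t : ℝ) (x y : EuclideanSpace ℝ (Fin d)) : ℝ :=
  ∫ u in Set.Ioo a b,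
    Afun α D f g h t x (x + u • nv D Q x) * Afun α D f g h t (x + u • nv D Q x) y *
      u ^ (-α - 1)

/-- `∫_a^b f₀(k₂/u) f₂(u/rr) l(k₁/u) u^{-α-1} du`. -/
def Jint (α : ℝ) (f₀ f₂ l : ℝ → ℝ) (a b rr k₁ k₂ : ℝ) : ℝ :=
  ∫ u in Set.Ioo a b, f₀ (k₂ / u) * f₂ (u / rr) * l (k₁ / u) * u ^ (-α - 1)

/-- Lemma 3.5(i): if `β₂ > α + β₁*`, the two-jump term is negligible for
fixed interior points as `t → 0⁺`, but blows up near two distinct boundary points. -/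

private lemma ub_of_lowerScaling {f : ℝ → ℝ} (hf : StdFun f) {b : ℝ}
    (h : HasLowerScaling f b) :
    ∃ C : ℝ, 0 < C ∧ ∀ u : ℝ, 0 < u → u ≤ 1 → f u ≤ C * u ^ b := by
  obtain ⟨C, hC1, hC⟩ := h
  have hC0 : (0:ℝ) < C := lt_of_lt_of_le one_pos hC1
  refine ⟨C, hC0, fun u hu hu1 => ?_⟩
  have h1 := hC u 1 hu hu1 le_rfl
  rw [hf.2.2 1 le_rfl] at h1
  have e1 : ((1:ℝ)/u) ^ b = (u ^ b)⁻¹ := by rw [one_div, Real.inv_rpow hu.le]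
  rw [e1, one_div] at h1
  have hfu := hf.2.1 u hu
  have hub : (0:ℝ) < u ^ b := Real.rpow_pos_of_pos hu b
  have h2 : (C * u ^ b)⁻¹ ≤ (f u)⁻¹ := by rwa [mul_inv]
  exact (inv_le_inv₀ (by positivity) hfu).mp h2

private lemma lb_of_upperScaling {f : ℝ → ℝ} (hf : StdFun f) {b : ℝ}
    (h : HasUpperScaling f b) :
    ∃ C : ℝ, 0 < C ∧ ∀ u : ℝ, 0 < u → u ≤ 1 → C⁻¹ * u ^ b ≤ f u := by
  obtain ⟨C, hC1, hC⟩ := h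
  have hC0 : (0:ℝ) < C := lt_of_lt_of_le one_pos hC1
  refine ⟨C, hC0, fun u hu hu1 => ?_⟩
  have h1 := hC u 1 hu hu1 le_rfl
  rw [hf.2.2 1 le_rfl] at h1
  have e1 : ((1:ℝ)/u) ^ b = (u ^ b)⁻¹ := by rw [one_div, Real.inv_rpow hu.le]
  rw [e1, one_div] at h1
  have hfu := hf.2.1 u hu
  have hub : (0:ℝ) < u ^ b := Real.rpow_pos_of_pos hu b
  have h2 : (f u)⁻¹ ≤ (C⁻¹ * u ^ b)⁻¹ := by rwa [mul_inv, inv_inv]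
  exact (inv_le_inv₀ hfu (by positivity)).mp h2

private lemma ell_bounds {l : ℝ → ℝ} {β₁ β₂ : ℝ} (hl : StdFun l)
    (hsc : EllScaling l β₁ β₂) {ε : ℝ} (hε : 0 < ε) :
    ∃ C : ℝ, 0 < C ∧ ∀ u : ℝ, 0 < u → u ≤ 1 →
      C⁻¹ * u ^ ε ≤ l u ∧ l u ≤ C * u ^ (-ε) := by
  obtain ⟨C, hC1, hC⟩ := hsc ε hε
  have hC0 : (0:ℝ) < C := lt_of_lt_of_le one_pos hC1
  refine ⟨C, hC0, fun u hu hu1 => ?_⟩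
  obtain ⟨h1, h2⟩ := hC u 1 hu hu1 le_rfl
  rw [hl.2.2 1 le_rfl] at h1 h2
  have hlu := hl.2.1 u hu
  constructor
  · have e1 : ((1:ℝ)/u) ^ (min ε β₂) = (u ^ (min ε β₂))⁻¹ := by
      rw [one_div, Real.inv_rpow hu.le]
    rw [e1, one_div] at h2
    have h3 : (l u)⁻¹ ≤ (C⁻¹ * u ^ (min ε β₂))⁻¹ := by rwa [mul_inv, inv_inv]
    have h4 : C⁻¹ * u ^ (min ε β₂) ≤ l u :=
      (inv_le_inv₀ hlu (by positivity)).mp h3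
    refine le_trans ?_ h4
    have h5 : u ^ ε ≤ u ^ (min ε β₂) :=
      Real.rpow_le_rpow_of_exponent_ge hu hu1 (min_le_left _ _)
    exact mul_le_mul_of_nonneg_left h5 (by positivity)
  · have e1 : ((1:ℝ)/u) ^ (-(min ε β₁)) = ((u ^ (-(min ε β₁)))⁻¹) := by
      rw [one_div, Real.inv_rpow hu.le]
    rw [e1, one_div] at h1
    have h3 : (C * u ^ (-(min ε β₁)))⁻¹ ≤ (l u)⁻¹ := by rwa [mul_inv]
    have h4 : l u ≤ C * u ^ (-(min ε β₁)) :=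
      (inv_le_inv₀ (by positivity) hlu).mp h3
    refine le_trans h4 ?_
    have h5 : u ^ (-(min ε β₁)) ≤ u ^ (-ε) :=
      Real.rpow_le_rpow_of_exponent_ge hu hu1 (by have := min_le_left ε β₁; linarith)
    exact mul_le_mul_of_nonneg_left h5 hC0.le

theorem statement_8
    (d : ℕ) (hd : 2 ≤ d)
    (D : Set (EuclideanSpace ℝ (Fin d))) (hDopen : IsOpen D)
    (hDbdd : Bornology.IsBounded D)
    (α β₁ β₁s β₂ β₂s : ℝ) (hα0 : 0 < α) (hα2 : α < 2)
    (hβ₁ : 0 ≤ β₁) (hβ₁s : β₁ ≤ β₁s) (hβ₂ : 0 ≤ β₂) (hβ₂s : β₂ ≤ β₂s)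
    (Φ₁ Φ₂ l : ℝ → ℝ)
    (hΦ₁ : StdFun Φ₁) (hΦ₁inc : AlmostIncreasingOn01 Φ₁)
    (hΦ₁low : LowerIndexIs Φ₁ β₁) (hΦ₁up : UpperIndexIs Φ₁ β₁s)
    (hΦ₂ : StdFun Φ₂) (hΦ₂inc : AlmostIncreasingOn01 Φ₂)
    (hΦ₂low : LowerIndexIs Φ₂ β₂) (hΦ₂up : UpperIndexIs Φ₂ β₂s)
    (hl : StdFun l) (hlscale : EllScaling l β₁ β₂)
    (Φ₀ : ℝ → ℝ) (hΦ₀def : ∀ r : ℝ, Φ₀ r = Φ₁ r * l r)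
    (hgap : α + β₁s < β₂) :
    (∀ x ∈ D, ∀ y ∈ D, x ≠ y →
      Tendsto (fun t : ℝ =>
          t * dist x y ^ (-α) * Afun α D Φ₀ Φ₀ (fun _ => (1 : ℝ)) t x y /
            Afun α D Φ₁ Φ₂ l t x y)
        (𝓝[>] (0 : ℝ)) (𝓝 0)) ∧
    (∀ Qb ∈ frontier D, ∀ Qb' ∈ frontier D, Qb ≠ Qb' →
      Tendsto (fun t : ℝ =>
          Filter.liminf
            (fun p : EuclideanSpace ℝ (Fin d) × EuclideanSpace ℝ (Fin d) =>
              t * dist p.1 p.2 ^ (-α) * Afun α D Φ₀ Φ₀ (fun _ => (1 : ℝ)) t p.1 p.2 /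
                Afun α D Φ₁ Φ₂ l t p.1 p.2)
            ((𝓝[D] Qb) ×ˢ (𝓝[D] Qb')))
        (𝓝[>] (0 : ℝ)) atTop) := by
  have hα0' : (0:ℝ) < 1/α := by positivity
  constructor
  · intro x hx y hy hxy
    have hDne : D.Nonempty := ⟨x, hx⟩
    have hnt : Nontrivial (EuclideanSpace ℝ (Fin d)) := ⟨⟨x, y, hxy⟩⟩
    have hfro : (frontier D).Nonempty := by
      rw [nonempty_frontier_iff]
      exact ⟨hDne, fun h => NormedSpace.unbounded_univ ℝ (EuclideanSpace ℝ (Fin d)) (h ▸ hDbdd)⟩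
    have hddpos : ∀ z ∈ D, 0 < dd D z := by
      intro z hz
      have hznf : z ∉ frontier D := by
        rw [hDopen.frontier_eq]; exact fun h => h.2 hz
      exact (isClosed_frontier.notMem_iff_infDist_pos hfro).mp hznf
    have hdx := hddpos x hx
    have hdy := hddpos y hy
    have hr : 0 < dist x y := dist_pos.2 hxy
    have hm : 0 < min (dd D x) (dd D y) := lt_min hdx hdy
    have ht₀ : 0 < (min (dd D x) (dd D y)) ^ α := Real.rpow_pos_of_pos hm α
    set K : ℝ := dist x y ^ (-α) *
        (Φ₀ (min (dd D x) (dd D y) / dist x y) * Φ₀ (max (dd D x) (dd D y) / dist x y) * 1) /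
        (Φ₁ (min (dd D x) (dd D y) / dist x y) * Φ₂ (max (dd D x) (dd D y) / dist x y) *
          l (min (dd D x) (dd D y) /
            min (max (dd D x) (dd D y)) (dist x y))) with hKdef
    have hev : ∀ᶠ t in 𝓝[>] (0:ℝ),
        t * dist x y ^ (-α) * Afun α D Φ₀ Φ₀ (fun _ => (1:ℝ)) t x y /
          Afun α D Φ₁ Φ₂ l t x y = t * K := by
      filter_upwards [Ioo_mem_nhdsGT ht₀] with t ht
      have hts : t ^ (1/α) ≤ min (dd D x) (dd D y) := by
        have h1 : t ^ (1/α) < (min (dd D x) (dd D y) ^ α) ^ (1/α) :=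
          Real.rpow_lt_rpow ht.1.le ht.2 hα0'
        have h2 : (min (dd D x) (dd D y) ^ α) ^ (1/α) = min (dd D x) (dd D y) := by
          rw [← Real.rpow_mul hm.le, mul_one_div_cancel hα0.ne', Real.rpow_one]
        rw [h2] at h1
        exact h1.le
      have hts2 : t ^ (1/α) ≤ max (dd D x) (dd D y) := hts.trans (min_le_max)
      simp only [Afun, hKdef]
      rw [max_eq_left hts, max_eq_left hts2]
      ring
    have h0 : Tendsto (fun t : ℝ => t * K) (𝓝[>] (0:ℝ)) (𝓝 0) := by
      have h1 : Tendsto (id : ℝ → ℝ) (𝓝[>] (0:ℝ)) (𝓝 0) :=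
        tendsto_id.mono_left nhdsWithin_le_nhds
      simpa using h1.mul_const K
    have hev' : (fun t : ℝ => t * K) =ᶠ[𝓝[>] (0:ℝ)]
        (fun t => t * dist x y ^ (-α) * Afun α D Φ₀ Φ₀ (fun _ => (1:ℝ)) t x y /
          Afun α D Φ₁ Φ₂ l t x y) := hev.mono fun t h => h.symm
    exact Filter.Tendsto.congr' hev' h0
  · intro Qb hQb Qb' hQb' hQne
    haveI hnb1 : (𝓝[D] Qb).NeBot :=
      mem_closure_iff_nhdsWithin_neBot.mp (frontier_subset_closure hQb)
    haveI hnb2 : (𝓝[D] Qb').NeBot :=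
      mem_closure_iff_nhdsWithin_neBot.mp (frontier_subset_closure hQb')
    have hR : 0 < dist Qb Qb' := dist_pos.2 hQne
    set R := dist Qb Qb' with hRdef
    set γ := (β₂ - α - β₁s)/3 with hγdef
    have hγ : 0 < γ := by rw [hγdef]; linarith
    obtain ⟨C₂, hC₂0, hΦ₂ub⟩ := ub_of_lowerScaling hΦ₂
      (hΦ₂low.1 (α + β₁s + 2*γ) (by rw [hγdef]; linarith))
    obtain ⟨C₁, hC₁0, hΦ₁lb⟩ := lb_of_upperScaling hΦ₁ (hΦ₁up.1 (β₁s + γ/2) (by linarith))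
    obtain ⟨C₂', hC₂'0, hΦ₂lb⟩ := lb_of_upperScaling hΦ₂ (hΦ₂up.1 (β₂s + 1) (by linarith))
    obtain ⟨Cl, hCl0, hlb⟩ := ell_bounds hl hlscale (show (0:ℝ) < γ/8 by positivity)
    obtain ⟨Ca, hCa1, hain⟩ := hΦ₁inc
    have hCa0 : (0:ℝ) < Ca := lt_of_lt_of_le one_pos hCa1
    have hΦ₁ub : ∀ u : ℝ, 0 < u → u ≤ 1 → Φ₁ u ≤ Ca := by
      intro u hu hu1
      have h := hain u 1 hu hu1 le_rfl
      rwa [hΦ₁.2.2 1 le_rfl, mul_one] at h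
    set e' : ℝ := (β₁s + γ/2) + γ/4 - (α + β₁s + 2*γ) with he'def
    have he' : e' = -α - 5*γ/4 := by rw [he'def]; ring
    set θ : ℝ := 1 + (1/α) * e' with hθdef
    have hθeq : θ = -(5*γ/4)/α := by
      rw [hθdef, he']; field_simp; ring
    have hθneg : θ < 0 := by
      rw [hθeq]; exact div_neg_of_neg_of_pos (by linarith) hα0
    set K₀ : ℝ := C₁⁻¹ * (Cl⁻¹)^2 / C₂ with hK₀def
    have hK₀ : 0 < K₀ := by rw [hK₀def]; positivity
    set K₁ : ℝ := K₀ * (R/2) ^ (-α + -e') with hK₁def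
    have hK₁ : 0 < K₁ := by
      rw [hK₁def]; exact mul_pos hK₀ (Real.rpow_pos_of_pos (by positivity) _)
    have hg : Tendsto (fun t : ℝ => K₁ * t ^ θ) (𝓝[>] (0:ℝ)) atTop := by
      have h2 := (tendsto_rpow_atTop (show (0:ℝ) < -θ by linarith)).comp
        (tendsto_inv_nhdsGT_zero (𝕜 := ℝ))
      have h1 : Tendsto (fun t : ℝ => t ^ θ) (𝓝[>] (0:ℝ)) atTop := by
        refine Filter.Tendsto.congr' ?_ h2
        filter_upwards [self_mem_nhdsWithin] with t ht
        have ht0 : (0:ℝ) < t := ht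
        simp only [Function.comp]
        rw [Real.inv_rpow ht0.le, ← Real.rpow_neg ht0.le, neg_neg]
      exact h1.const_mul_atTop hK₁
    have ht₀ : (0:ℝ) < (R/4) ^ α := Real.rpow_pos_of_pos (by positivity) α
    refine tendsto_atTop_mono' _ ?_ hg
    filter_upwards [Ioo_mem_nhdsGT ht₀] with t ht
    obtain ⟨ht0, htt₀⟩ := ht
    set s := t ^ (1/α) with hsdef
    have hs0 : 0 < s := Real.rpow_pos_of_pos ht0 _
    have hsR : s < R/4 := by
      have h1 : t ^ (1/α) < ((R/4) ^ α) ^ (1/α) := Real.rpow_lt_rpow ht0.le htt₀ hα0'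
      have h2 : ((R/4:ℝ) ^ α) ^ (1/α) = R/4 := by
        rw [← Real.rpow_mul (by positivity), mul_one_div_cancel hα0.ne', Real.rpow_one]
      rw [h2] at h1; exact h1
    have hcd : Continuous (dd D) := Metric.continuous_infDist_pt (frontier D)
    have hddQ : Tendsto (dd D) (𝓝[D] Qb) (𝓝 0) := by
      have h1 : Tendsto (dd D) (𝓝 Qb) (𝓝 (dd D Qb)) := hcd.continuousAt
      rw [show dd D Qb = 0 from Metric.infDist_zero_of_mem hQb] at h1
      exact h1.mono_left nhdsWithin_le_nhds
    have hddQ' : Tendsto (dd D) (𝓝[D] Qb') (𝓝 0) := by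
      have h1 : Tendsto (dd D) (𝓝 Qb') (𝓝 (dd D Qb')) := hcd.continuousAt
      rw [show dd D Qb' = 0 from Metric.infDist_zero_of_mem hQb'] at h1
      exact h1.mono_left nhdsWithin_le_nhds
    have hev1 : ∀ᶠ p in (𝓝[D] Qb) ×ˢ (𝓝[D] Qb'),
        dd D (p.1 : EuclideanSpace ℝ (Fin d)) < s :=
      Filter.Eventually.prod_inl (hddQ.eventually_lt_const hs0) _
    have hev2 : ∀ᶠ p in (𝓝[D] Qb) ×ˢ (𝓝[D] Qb'),
        dd D (p.2 : EuclideanSpace ℝ (Fin d)) < s :=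
      Filter.Eventually.prod_inr (hddQ'.eventually_lt_const hs0) _
    have hdistT : Tendsto (fun p : EuclideanSpace ℝ (Fin d) × EuclideanSpace ℝ (Fin d) =>
        dist p.1 p.2) ((𝓝[D] Qb) ×ˢ (𝓝[D] Qb')) (𝓝 R) := by
      have h1 : Tendsto (fun p : EuclideanSpace ℝ (Fin d) × EuclideanSpace ℝ (Fin d) =>
          dist p.1 p.2) (𝓝 (Qb, Qb')) (𝓝 R) := (continuous_fst.dist continuous_snd).continuousAt
      refine h1.mono_left ?_
      rw [nhds_prod_eq]
      exact Filter.prod_mono nhdsWithin_le_nhds nhdsWithin_le_nhds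
    have hev3 := hdistT.eventually_const_lt (show R/2 < R by linarith)
    have hev4 := hdistT.eventually_lt_const (show R < 2*R by linarith)
    set Mt : ℝ := t * (R/2) ^ (-α) *
        (Ca * (Cl * (s/(2*R)) ^ (-(γ/8)))^2 / (C₂'⁻¹ * (s/(2*R)) ^ (β₂s+1))) with hMtdef
    have hmain : ∀ᶠ p in (𝓝[D] Qb) ×ˢ (𝓝[D] Qb'),
        K₁ * t ^ θ ≤ t * dist (p.1 : EuclideanSpace ℝ (Fin d)) p.2 ^ (-α) *
            Afun α D Φ₀ Φ₀ (fun _ => (1:ℝ)) t p.1 p.2 / Afun α D Φ₁ Φ₂ l t p.1 p.2 ∧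
          t * dist (p.1 : EuclideanSpace ℝ (Fin d)) p.2 ^ (-α) *
            Afun α D Φ₀ Φ₀ (fun _ => (1:ℝ)) t p.1 p.2 / Afun α D Φ₁ Φ₂ l t p.1 p.2 ≤ Mt := by
      filter_upwards [hev1, hev2, hev3, hev4] with p h1 h2 h3 h4
      set x := (p.1 : EuclideanSpace ℝ (Fin d)) with hxdef
      set y := (p.2 : EuclideanSpace ℝ (Fin d)) with hydef
      have hr0 : 0 < dist x y := lt_trans (by positivity) h3
      have hsr : s < dist x y := by linarith
      have hu0 : 0 < s / dist x y := div_pos hs0 hr0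
      have hu1 : s / dist x y ≤ 1 := (div_le_one hr0).mpr hsr.le
      have husl : s / (2*R) ≤ s / dist x y :=
        div_le_div_of_nonneg_left hs0.le hr0 h4.le
      have husl0 : 0 < s / (2*R) := by positivity
      have hP1 : 0 < Φ₁ (s / dist x y) := hΦ₁.2.1 _ hu0
      have hP2 : 0 < Φ₂ (s / dist x y) := hΦ₂.2.1 _ hu0
      have hL0 : 0 < l (s / dist x y) := hl.2.1 _ hu0
      have hm1 : max (min (dd D x) (dd D y)) s = s :=
        max_eq_right (le_of_lt (lt_of_le_of_lt (min_le_left _ _) h1))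
      have hm2 : max (max (dd D x) (dd D y)) s = s :=
        max_eq_right (max_le h1.le h2.le)
      have hratio : t * dist x y ^ (-α) * Afun α D Φ₀ Φ₀ (fun _ => (1:ℝ)) t x y /
          Afun α D Φ₁ Φ₂ l t x y
          = t * dist x y ^ (-α) *
            (Φ₁ (s / dist x y) * (l (s / dist x y))^2 / Φ₂ (s / dist x y)) := by
        simp only [Afun]
        rw [← hsdef, hm1, hm2, min_eq_left hsr.le, div_self hs0.ne', hl.2.2 1 le_rfl,
          hΦ₀def]
        field_simp
      rw [hratio]
      have hupow : (s / dist x y) ^ e'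
          = (s / dist x y)^(β₁s + γ/2) * ((s / dist x y)^(γ/8))^2 / (s / dist x y)^(α + β₁s + 2*γ) := by
        rw [pow_two, ← Real.rpow_add hu0, ← Real.rpow_add hu0, ← Real.rpow_sub hu0, he'def]
        congr 1
        ring
      have key : K₀ * (s / dist x y) ^ e' ≤
          Φ₁ (s / dist x y) * (l (s / dist x y))^2 / Φ₂ (s / dist x y) := by
        have hq1 := hΦ₁lb _ hu0 hu1
        have hq2 := (hlb _ hu0 hu1).1
        have hq3 := hΦ₂ub _ hu0 hu1
        have hstep : (C₁⁻¹ * (s / dist x y) ^ (β₁s + γ/2)) *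
            (Cl⁻¹ * (s / dist x y) ^ (γ/8))^2 / (C₂ * (s / dist x y) ^ (α + β₁s + 2*γ))
            ≤ Φ₁ (s / dist x y) * (l (s / dist x y))^2 / Φ₂ (s / dist x y) := by
          refine div_le_div₀ (mul_nonneg hP1.le (sq_nonneg _)) ?_ hP2 hq3
          exact mul_le_mul hq1 (pow_le_pow_left₀ (by positivity) hq2 2) (by positivity) hP1.le
        refine le_trans (le_of_eq ?_) hstep
        rw [hK₀def, hupow]
        have hne1 : ((s / dist x y) ^ (α + β₁s + 2*γ)) ≠ 0 :=
          (Real.rpow_pos_of_pos hu0 _).ne'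
        field_simp
      have hA : t * dist x y ^ (-α) * (K₀ * (s / dist x y) ^ e')
          = K₀ * dist x y ^ (-α + -e') * t ^ θ := by
        rw [Real.div_rpow hs0.le dist_nonneg, Real.rpow_add hr0,
          Real.rpow_neg dist_nonneg e', hθdef, Real.rpow_add ht0, Real.rpow_one,
          Real.rpow_mul ht0.le, ← hsdef]
        ring
      constructor
      · calc K₁ * t ^ θ = K₀ * (R/2) ^ (-α + -e') * t ^ θ := by rw [hK₁def]
          _ ≤ K₀ * dist x y ^ (-α + -e') * t ^ θ := by
              have h6 : (R/2:ℝ) ^ (-α + -e') ≤ dist x y ^ (-α + -e') :=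
                Real.rpow_le_rpow (by positivity) h3.le (by rw [he']; linarith)
              exact mul_le_mul_of_nonneg_right (mul_le_mul_of_nonneg_left h6 hK₀.le)
                (Real.rpow_nonneg ht0.le θ)
          _ = t * dist x y ^ (-α) * (K₀ * (s / dist x y) ^ e') := hA.symm
          _ ≤ t * dist x y ^ (-α) *
              (Φ₁ (s / dist x y) * (l (s / dist x y))^2 / Φ₂ (s / dist x y)) :=
              mul_le_mul_of_nonneg_left key
                (mul_nonneg ht0.le (Real.rpow_nonneg dist_nonneg _))
      · have hq1 := hΦ₁ub _ hu0 hu1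
        have hq2 : l (s / dist x y) ≤ Cl * (s/(2*R)) ^ (-(γ/8)) := by
          refine le_trans (hlb _ hu0 hu1).2 ?_
          have h5 : (s / dist x y) ^ (-(γ/8)) ≤ (s/(2*R)) ^ (-(γ/8)) :=
            (Real.rpow_le_rpow_iff_of_neg hu0 husl0 (by linarith)).mpr husl
          exact mul_le_mul_of_nonneg_left h5 hCl0.le
        have hq3 : C₂'⁻¹ * (s/(2*R)) ^ (β₂s+1) ≤ Φ₂ (s / dist x y) := by
          refine le_trans ?_ (hΦ₂lb _ hu0 hu1)
          have h5 : (s/(2*R)) ^ (β₂s+1) ≤ (s / dist x y) ^ (β₂s+1) :=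
            Real.rpow_le_rpow husl0.le husl (by linarith)
          exact mul_le_mul_of_nonneg_left h5 (by positivity)
        have hX : Φ₁ (s / dist x y) * (l (s / dist x y))^2 / Φ₂ (s / dist x y)
            ≤ Ca * (Cl * (s/(2*R)) ^ (-(γ/8)))^2 / (C₂'⁻¹ * (s/(2*R)) ^ (β₂s+1)) := by
          refine div_le_div₀ (mul_nonneg hCa0.le (sq_nonneg _)) ?_
            (mul_pos (inv_pos.mpr hC₂'0) (Real.rpow_pos_of_pos husl0 _)) hq3
          exact mul_le_mul hq1 (pow_le_pow_left₀ hL0.le hq2 2) (sq_nonneg _) hCa0.le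
        have hXn : 0 ≤ Φ₁ (s / dist x y) * (l (s / dist x y))^2 / Φ₂ (s / dist x y) :=
          div_nonneg (mul_nonneg hP1.le (sq_nonneg _)) hP2.le
        have h7 : dist x y ^ (-α) ≤ (R/2:ℝ) ^ (-α) :=
          (Real.rpow_le_rpow_iff_of_neg hr0 (by positivity) (by linarith)).mpr h3.le
        rw [hMtdef]
        refine mul_le_mul ?_ hX hXn
          (mul_nonneg ht0.le (Real.rpow_nonneg (by positivity) _))
        exact mul_le_mul_of_nonneg_left h7 ht0.le
    refine le_liminf_of_le (isCoboundedUnder_ge_of_eventually_le _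
      (hmain.mono fun p hp => hp.2)) (hmain.mono fun p hp => hp.1)
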